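/- Let m be a positive integer and suppose s_m = α_0·s_0 + α_1·s_1 + ⋯ + α_{m−1}·s_{m−1} for integers α_0, …, α_{m−1}. Then there exists an integer t such that ∑_{j=0}^{m−1} α_j = 1 + t·c·a^n. Moreover, if all the α_j are nonnegative, then t > 0. -/
import Mathlib


/-- if `s_m = α_0·s_0 + ⋯ + α_{m−1}·s_{m−1}` with integer
coefficients `α_j` and `m > 0`, then `∑_{j<m} α_j = 1 + t·c·a^n` for some
integer `t`; moreover if all the `α_j` are nonnegative, then `t > 0`. -/
theorem stmt_9 (a c d n : ℕ) (ha : 2 ≤ a) (hc : 0 < c) (hd : 0 < d)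
    (hdca : d < c * a) (hda : Nat.Coprime d a) (hdc : Nat.Coprime d c) (hn : 0 < n)
    (s : ℕ → ℕ) (hs : ∀ j, s j = c * a ^ (n + j) - d)
    (m : ℕ) (hm : 0 < m) (α : ℕ → ℤ)
    (h : (s m : ℤ) = ∑ j ∈ Finset.range m, α j * (s j : ℤ)) :
    ∃ t : ℤ, (∑ j ∈ Finset.range m, α j) = 1 + t * c * a ^ n ∧
      ((∀ j < m, 0 ≤ α j) → 0 < t) := by
  have ha1 : 1 ≤ a := by omega
  have hle : ∀ j, d ≤ c * a ^ (n + j) := by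
    intro j
    calc d ≤ c * a := hdca.le
    _ = c * a ^ 1 := by ring
    _ ≤ c * a ^ (n + j) := Nat.mul_le_mul_left _ (Nat.pow_le_pow_right ha1 (by omega))
  have hsz : ∀ j, (s j : ℤ) = c * a ^ (n + j) - d := by
    intro j; rw [hs j]; push_cast [hle j]; ring
  set S : ℤ := ∑ j ∈ Finset.range m, α j with hS
  have hsum : ∑ j ∈ Finset.range m, α j * (s j : ℤ)
      = (c * a ^ n : ℤ) * (∑ j ∈ Finset.range m, α j * a ^ j) - d * S := by
    rw [hS, Finset.mul_sum, Finset.mul_sum, ← Finset.sum_sub_distrib]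
    apply Finset.sum_congr rfl
    intro j _
    rw [hsz j, pow_add]
    ring
  have key : (d : ℤ) * (S - 1)
      = (c * a ^ n : ℤ) * ((∑ j ∈ Finset.range m, α j * a ^ j) - a ^ m) := by
    have h' := h
    rw [hsz m, hsum, pow_add] at h'
    linarith [h']
  have hcopn : Nat.Coprime d (c * a ^ n) := hdc.mul_right (hda.pow_right n)
  have hcop : IsCoprime ((c : ℤ) * a ^ n) (d : ℤ) := by
    have := (Nat.isCoprime_iff_coprime.mpr hcopn.symm)
    push_cast at this
    exact this
  have hdvd : ((c : ℤ) * a ^ n) ∣ (S - 1) := by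
    exact hcop.dvd_of_dvd_mul_right
      ⟨(∑ j ∈ Finset.range m, α j * a ^ j) - a ^ m, by linarith [key]⟩
  obtain ⟨t, ht⟩ := hdvd
  refine ⟨t, by rw [hS] at ht ⊢; linarith [ht], ?_⟩
  intro hα
  by_contra hpos
  push_neg at hpos
  -- t ≤ 0, so S ≤ 1
  have hca : (0 : ℤ) < (c : ℤ) * a ^ n := by positivity
  have hS1 : S ≤ 1 := by nlinarith
  have hmono : ∀ i j : ℕ, i ≤ j → s i ≤ s j := by
    intro i j hij
    rw [hs i, hs j]
    exact Nat.sub_le_sub_right (Nat.mul_le_mul_left _ (Nat.pow_le_pow_right ha1 (by omega))) _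
  obtain ⟨k, rfl⟩ : ∃ k, m = k + 1 := ⟨m - 1, by omega⟩
  have h1 : (s (k + 1) : ℤ) ≤ S * s k := by
    rw [h, hS, Finset.sum_mul]
    apply Finset.sum_le_sum
    intro j hj
    have hj' : j < k + 1 := Finset.mem_range.mp hj
    have : (s j : ℤ) ≤ s k := by exact_mod_cast hmono j k (by omega)
    exact mul_le_mul_of_nonneg_left this (hα j hj')
  have h2 : S * (s k : ℤ) ≤ s k := by
    nlinarith [Int.ofNat_nonneg (s k)]
  have h3 : s k < s (k + 1) := by
    rw [hs k, hs (k + 1)]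
    have : c * a ^ (n + k) < c * a ^ (n + (k + 1)) :=
      mul_lt_mul_of_pos_left (Nat.pow_lt_pow_right ha (by omega)) hc
    have h4 := hle k
    omega
  have h3' : (s k : ℤ) < s (k + 1) := by exact_mod_cast h3
  linarith
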